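/- Equivariance of the right twist: for every invertible k×k complex matrix α and every invertible diagonal n×n complex matrix β, the right twist satisfies τ→(α·A·β) = (α⁻¹)ᵀ · τ→(A) · β⁻¹. -/

import Mathlib

open scoped BigOperators

/-- The columns of `A` are `n`-periodic. -/
def ColPeriodic (k n : ℕ) (A : ℤ → Fin k → ℂ) : Prop :=
  ∀ a : ℤ, A (a + (n : ℤ)) = A a

/-- `A` has rank `k`, i.e. its columns span `ℂ^k`. -/
def FullRank (k : ℕ) (A : ℤ → Fin k → ℂ) : Prop :=
  Submodule.span ℂ (Set.range A) = ⊤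

/-- The Gale (componentwise) partial order on finite subsets of `ℤ` of equal
cardinality: `B ≼ C` iff they have the same cardinality and, for each `i`, the
`i`-th smallest element of `B` is at most the `i`-th smallest element of `C`
(equivalently, the counting condition below). -/
def galeLE (B C : Finset ℤ) : Prop :=
  B.card = C.card ∧
    ∀ t : ℤ, (B.filter fun x => t ≤ x).card ≤ (C.filter fun x => t ≤ x).card

/-- The columns of `A` indexed by `J` form a basis of `ℂ^k`. -/
def IsColBasis (k : ℕ) (A : ℤ → Fin k → ℂ) (J : Finset ℤ) : Prop :=
  J.card = k ∧ LinearIndependent ℂ (fun j : (J : Set ℤ) => A (j : ℤ)) ∧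
    Submodule.span ℂ (A '' (J : Set ℤ)) = ⊤

/-- `I` is the `≼_a`-minimal `k`-element subset of `{a, a+1, …, a+n-1}` whose
columns form a basis of `ℂ^k` (the `a`-minimal basis `I→_a`). -/
def IsMinBasis (k n : ℕ) (A : ℤ → Fin k → ℂ) (a : ℤ) (I : Finset ℤ) : Prop :=
  I ⊆ Finset.Ico a (a + (n : ℤ)) ∧ IsColBasis k A I ∧
    ∀ J : Finset ℤ, J ⊆ Finset.Ico a (a + (n : ℤ)) → IsColBasis k A J → galeLE I J

/-- `I` is the `≼_{a+1}`-maximal `k`-element subset of `{a-n+1, …, a}` whose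
columns form a basis of `ℂ^k` (the `a`-maximal basis `I←_a`).  Note that on
representatives in `{a-n+1, …, a}` the cyclic order `≺_{a+1}` agrees with the
usual order of `ℤ`. -/
def IsMaxBasis (k n : ℕ) (A : ℤ → Fin k → ℂ) (a : ℤ) (I : Finset ℤ) : Prop :=
  I ⊆ Finset.Ioc (a - (n : ℤ)) a ∧ IsColBasis k A I ∧
    ∀ J : Finset ℤ, J ⊆ Finset.Ioc (a - (n : ℤ)) a → IsColBasis k A J → galeLE J I

/-- The standard symmetric bilinear form `⟨x|y⟩ = ∑ i, x i * y i` on `ℂ^k`. -/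
noncomputable def bil (k : ℕ) (x y : Fin k → ℂ) : ℂ := ∑ i, x i * y i

/-- `π` is the bounded affine permutation of `A`:
`π a` is the least `r` with `a ≤ r ≤ a + n` and `A a ∈ span(A (a+1), …, A r)`. -/
def IsBAP (k n : ℕ) (A : ℤ → Fin k → ℂ) (π : ℤ → ℤ) : Prop :=
  ∀ a : ℤ,
    a ≤ π a ∧ π a ≤ a + (n : ℤ) ∧
    A a ∈ Submodule.span ℂ (A '' Set.Ioc a (π a)) ∧
    ∀ r : ℤ, a ≤ r → r ≤ a + (n : ℤ) →
      A a ∈ Submodule.span ℂ (A '' Set.Ioc a r) → π a ≤ r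

/-- `T` is the right twist `τ→(A)`: for each `a`, the column `T a` pairs to `1`
with `A a` and to `0` with the other columns of the `a`-minimal basis. -/
def IsRightTwist (k n : ℕ) (A T : ℤ → Fin k → ℂ) : Prop :=
  ∀ (a : ℤ) (I : Finset ℤ), IsMinBasis k n A a I →
    ∀ b ∈ I, bil k (T a) (A b) = if b = a then 1 else 0

/-- `T` is the left twist `τ←(A)`: for each `a`, the column `T a` pairs to `1`
with `A a` and to `0` with the other columns of the `a`-maximal basis. -/
def IsLeftTwist (k n : ℕ) (A T : ℤ → Fin k → ℂ) : Prop :=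
  ∀ (a : ℤ) (I : Finset ℤ), IsMaxBasis k n A a I →
    ∀ b ∈ I, bil k (T a) (A b) = if b = a then 1 else 0

/-- `Δ_I(A)`, where `I = {i 0 < i 1 < ⋯ < i (k-1)}` is given by a strictly
monotone enumeration `i : Fin k → ℤ`: the determinant of the `k×k` matrix with
columns `A (i 0), …, A (i (k-1))`. -/
noncomputable def Delta (k : ℕ) (A : ℤ → Fin k → ℂ) (i : Fin k → ℤ) : ℂ :=
  Matrix.det (Matrix.of fun r s : Fin k => A (i s) r)


open scoped BigOperators
open Submodule Finset

section Greedy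

open scoped Classical

variable {k n : ℕ} (A : ℤ → Fin k → ℂ) (a : ℤ)

/-- The greedy basis in the window `[a, a+n)`. -/
noncomputable def greedySet : Finset ℤ :=
  (Finset.Ico a (a + (n : ℤ))).filter
    (fun x => A x ∉ Submodule.span ℂ (A '' Set.Ico a x))

lemma greedySet_subset : greedySet (n := n) A a ⊆ Finset.Ico a (a + (n : ℤ)) :=
  Finset.filter_subset _ _

lemma mem_greedySet {x : ℤ} :
    x ∈ greedySet (n := n) A a ↔
      x ∈ Finset.Ico a (a + (n : ℤ)) ∧ A x ∉ Submodule.span ℂ (A '' Set.Ico a x) := by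
  simp [greedySet]

lemma mem_span_greedy_aux (N : ℕ) :
    ∀ x : ℤ, a ≤ x → x < a + (n : ℤ) → (x - a).toNat ≤ N →
      A x ∈ Submodule.span ℂ (A '' ↑((greedySet (n := n) A a).filter (fun y => y ≤ x))) := by
  induction N with
  | zero =>
    intro x hx1 hx2 hxN
    by_cases hxG : x ∈ greedySet (n := n) A a
    · exact subset_span ⟨x, by simp [hxG], rfl⟩
    · have hx : A x ∈ Submodule.span ℂ (A '' Set.Ico a x) := by
        by_contra h
        exact hxG ((mem_greedySet A a).2 ⟨Finset.mem_Ico.2 ⟨hx1, hx2⟩, h⟩)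
      have he : Set.Ico a x = ∅ := Set.Ico_eq_empty (by omega)
      rw [he, Set.image_empty, Submodule.span_empty, Submodule.mem_bot] at hx
      rw [hx]; exact Submodule.zero_mem _
  | succ N ih =>
    intro x hx1 hx2 hxN
    by_cases hxG : x ∈ greedySet (n := n) A a
    · exact subset_span ⟨x, by simp [hxG], rfl⟩
    · have hx : A x ∈ Submodule.span ℂ (A '' Set.Ico a x) := by
        by_contra h
        exact hxG ((mem_greedySet A a).2 ⟨Finset.mem_Ico.2 ⟨hx1, hx2⟩, h⟩)
      refine Submodule.span_le.2 ?_ hx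
      rintro _ ⟨y, hy, rfl⟩
      obtain ⟨hya, hyx⟩ := hy
      have hy' := ih y hya (lt_trans hyx hx2) (by omega)
      refine Submodule.span_mono ?_ hy'
      apply Set.image_mono
      intro z hz
      simp only [Finset.coe_filter, Set.mem_setOf_eq] at hz ⊢
      exact ⟨hz.1, le_trans hz.2 (le_of_lt hyx)⟩

lemma mem_span_greedy {x : ℤ} (hx1 : a ≤ x) (hx2 : x < a + (n : ℤ)) :
    A x ∈ Submodule.span ℂ (A '' ↑((greedySet (n := n) A a).filter (fun y => y ≤ x))) :=
  mem_span_greedy_aux A a (x - a).toNat x hx1 hx2 le_rfl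

lemma injOn_greedy : Set.InjOn A ↑(greedySet (n := n) A a) := by
  have key : ∀ x y : ℤ, x ∈ greedySet (n := n) A a → y ∈ greedySet (n := n) A a →
      A x = A y → x < y → False := by
    intro x y hx hy hxy hlt
    rw [mem_greedySet] at hx hy
    apply hy.2
    rw [← hxy]
    exact subset_span ⟨x, ⟨(Finset.mem_Ico.1 hx.1).1, hlt⟩, rfl⟩
  intro x hx y hy hxy
  rcases lt_trichotomy x y with h | h | h
  · exact absurd (key x y hx hy hxy h) not_false
  · exact h
  · exact absurd (key y x hy hx hxy.symm h) not_false

lemma greedy_indep_set :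
    ∀ s : Finset ℤ, s ⊆ greedySet (n := n) A a →
      LinearIndependent ℂ (fun v : (A '' (s : Set ℤ) : Set (Fin k → ℂ)) => (v : Fin k → ℂ)) := by
  intro s
  induction s using Finset.induction_on_max with
  | empty =>
    intro _
    have he : (A '' ((∅ : Finset ℤ) : Set ℤ)) = (∅ : Set (Fin k → ℂ)) := by simp
    rw [he]
    exact linearIndependent_empty ℂ _
  | insert b s hmax ih =>
    intro hsub
    have hs : s ⊆ greedySet (n := n) A a := fun x hx => hsub (Finset.mem_insert_of_mem hx)
    have hb : b ∈ greedySet (n := n) A a := hsub (Finset.mem_insert_self _ _)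
    rw [mem_greedySet] at hb
    have himg : (A '' ((insert b s : Finset ℤ) : Set ℤ)) = insert (A b) (A '' (s : Set ℤ)) := by
      rw [Finset.coe_insert, Set.image_insert_eq]
    rw [himg]
    refine LinearIndepOn.id_insert (ih hs) ?_
    intro hmem
    apply hb.2
    refine Submodule.span_le.2 ?_ hmem
    rintro _ ⟨y, hy, rfl⟩
    refine subset_span ⟨y, ?_, rfl⟩
    have hy' := hs hy
    rw [mem_greedySet] at hy'
    exact ⟨(Finset.mem_Ico.1 hy'.1).1, hmax y hy⟩

lemma greedy_indep :
    LinearIndependent ℂ (fun j : ((greedySet (n := n) A a : Finset ℤ) : Set ℤ) => A (j : ℤ)) :=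
  (linearIndepOn_iff_image (injOn_greedy A a)).2
    (greedy_indep_set A a _ (Finset.Subset.refl _))

lemma greedy_span (hwin : Submodule.span ℂ (A '' Set.Ico a (a + (n : ℤ))) = ⊤) :
    Submodule.span ℂ (A '' ((greedySet (n := n) A a : Finset ℤ) : Set ℤ)) = ⊤ := by
  rw [← hwin]
  refine le_antisymm (Submodule.span_mono (Set.image_mono ?_)) (Submodule.span_le.2 ?_)
  · intro x hx
    have := greedySet_subset A a (Finset.mem_coe.1 hx)
    rw [Finset.mem_Ico] at this
    exact this
  · rintro _ ⟨y, hy, rfl⟩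
    refine Submodule.span_mono (Set.image_mono ?_) (mem_span_greedy A a hy.1 hy.2)
    intro z hz
    simp only [Finset.coe_filter, Set.mem_setOf_eq, Finset.mem_coe] at hz ⊢
    exact hz.1

lemma greedy_card (hk : 1 ≤ k)
    (hwin : Submodule.span ℂ (A '' Set.Ico a (a + (n : ℤ))) = ⊤) :
    (greedySet (n := n) A a).card = k := by
  have hfr : Module.finrank ℂ (Fin k → ℂ) = k := by
    rw [Module.finrank_pi, Fintype.card_fin]
  have h1 : (greedySet (n := n) A a).card ≤ k := by
    have := (greedy_indep (n := n) A a).fintype_card_le_finrank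
    rw [hfr] at this; simpa using this
  have h2 : k ≤ (greedySet (n := n) A a).card := by
    have hsp := greedy_span A a hwin
    have himg : (A '' ((greedySet (n := n) A a : Finset ℤ) : Set ℤ))
        = (((greedySet (n := n) A a).image A : Finset (Fin k → ℂ)) : Set (Fin k → ℂ)) := by
      rw [Finset.coe_image]
    have hle := finrank_span_finset_le_card (R := ℂ) ((greedySet (n := n) A a).image A)
    unfold Set.finrank at hle
    rw [← himg, hsp, finrank_top, hfr] at hle
    exact le_trans hle (Finset.card_image_le)
  omega

lemma greedy_colBasis (hk : 1 ≤ k)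
    (hwin : Submodule.span ℂ (A '' Set.Ico a (a + (n : ℤ))) = ⊤) :
    IsColBasis k A (greedySet (n := n) A a) :=
  ⟨greedy_card A a hk hwin, greedy_indep A a, greedy_span A a hwin⟩

lemma greedy_gale (hk : 1 ≤ k)
    (hwin : Submodule.span ℂ (A '' Set.Ico a (a + (n : ℤ))) = ⊤)
    (J : Finset ℤ) (hJsub : J ⊆ Finset.Ico a (a + (n : ℤ))) (hJ : IsColBasis k A J) :
    galeLE (greedySet (n := n) A a) J := by
  set G := greedySet (n := n) A a with hGdef
  have hGcard : G.card = k := greedy_card A a hk hwin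
  refine ⟨by rw [hGcard, hJ.1], ?_⟩
  intro t
  -- key counting: |J ∩ (<t)| ≤ |G ∩ (<t)|
  have key : (J.filter (fun x => x < t)).card ≤ (G.filter (fun x => x < t)).card := by
    set W := Submodule.span ℂ (A '' ((G.filter (fun x => x < t) : Finset ℤ) : Set ℤ)) with hW
    have hmemW : ∀ j ∈ J.filter (fun x => x < t), A j ∈ W := by
      intro j hj
      rw [Finset.mem_filter] at hj
      have hjI := Finset.mem_Ico.1 (hJsub hj.1)
      refine Submodule.span_mono (Set.image_mono ?_) (mem_span_greedy A a hjI.1 hjI.2)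
      intro z hz
      simp only [Finset.coe_filter, Set.mem_setOf_eq] at hz ⊢
      exact ⟨hz.1, lt_of_le_of_lt hz.2 hj.2⟩
    -- the family over J.filter is linearly independent
    have hsub : ((J.filter (fun x => x < t) : Finset ℤ) : Set ℤ) ⊆ (J : Set ℤ) := by
      intro z hz; exact Finset.mem_coe.2 (Finset.filter_subset _ _ (Finset.mem_coe.1 hz))
    have hindJ : LinearIndependent ℂ
        (fun j : ((J.filter (fun x => x < t) : Finset ℤ) : Set ℤ) => A (j : ℤ)) :=
      hJ.2.1.comp (Set.inclusion hsub) (Set.inclusion_injective hsub)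
    -- corestrict to W
    have hindW : LinearIndependent ℂ
        (fun j : ((J.filter (fun x => x < t) : Finset ℤ) : Set ℤ) =>
          (⟨A (j : ℤ), hmemW j (Finset.mem_coe.1 j.2)⟩ : W)) := by
      apply LinearIndependent.of_comp W.subtype
      exact hindJ
    have h1 : (J.filter (fun x => x < t)).card ≤ Module.finrank ℂ W := by
      have := hindW.fintype_card_le_finrank
      simpa using this
    have h2 : Module.finrank ℂ W ≤ (G.filter (fun x => x < t)).card := by
      have himg : (A '' ((G.filter (fun x => x < t) : Finset ℤ) : Set ℤ))
          = (((G.filter (fun x => x < t)).image A : Finset (Fin k → ℂ)) : Set (Fin k → ℂ)) := by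
        rw [Finset.coe_image]
      have hle := finrank_span_finset_le_card (R := ℂ) ((G.filter (fun x => x < t)).image A)
      unfold Set.finrank at hle
      rw [← himg] at hle
      exact le_trans hle (Finset.card_image_le)
    exact le_trans h1 h2
  have hGsplit := Finset.card_filter_add_card_filter_not
    (s := G) (fun x => t ≤ x)
  have hJsplit := Finset.card_filter_add_card_filter_not
    (s := J) (fun x => t ≤ x)
  have hGeq : (G.filter (fun x => ¬ t ≤ x)) = G.filter (fun x => x < t) := by
    apply Finset.filter_congr; intro x _; simp [not_le]
  have hJeq : (J.filter (fun x => ¬ t ≤ x)) = J.filter (fun x => x < t) := by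
    apply Finset.filter_congr; intro x _; simp [not_le]
  rw [hGeq] at hGsplit
  rw [hJeq] at hJsplit
  have hJcard : J.card = k := hJ.1
  omega

lemma greedy_isMinBasis (hk : 1 ≤ k)
    (hwin : Submodule.span ℂ (A '' Set.Ico a (a + (n : ℤ))) = ⊤) :
    IsMinBasis k n A a (greedySet (n := n) A a) :=
  ⟨greedySet_subset A a, greedy_colBasis A a hk hwin, fun J hJs hJ => greedy_gale A a hk hwin J hJs hJ⟩

end Greedy

section Transfer

variable {k n : ℕ}

lemma periodic_mul (A : ℤ → Fin k → ℂ) (hper : ColPeriodic k n A) :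
    ∀ (c x : ℤ), A (x + c * (n : ℤ)) = A x := by
  intro c
  induction c using Int.induction_on with
  | zero => simp
  | succ c ih =>
      intro x
      have h1 : x + (c + 1 : ℤ) * n = (x + c * n) + n := by ring
      rw [h1, hper, ih]
  | pred c ih =>
      intro x
      have h2 := hper (x + (-(c:ℤ) - 1) * n)
      have h3 : x + (-(c:ℤ) - 1) * n + n = x + (-(c:ℤ)) * n := by ring
      rw [h3] at h2
      rw [← h2, ih]

lemma window_span (hk : 1 ≤ k) (hkn : k ≤ n) (A : ℤ → Fin k → ℂ)
    (hper : ColPeriodic k n A) (hrank : FullRank k A) (a : ℤ) :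
    Submodule.span ℂ (A '' Set.Ico a (a + (n : ℤ))) = ⊤ := by
  have hn : (0:ℤ) < n := by exact_mod_cast lt_of_lt_of_le hk hkn
  rw [← hrank]
  apply le_antisymm
  · exact Submodule.span_mono (by rintro _ ⟨x, _, rfl⟩; exact ⟨x, rfl⟩)
  · rw [Submodule.span_le]
    rintro _ ⟨x, rfl⟩
    have hr1 : 0 ≤ (x - a) % n := Int.emod_nonneg _ (by omega)
    have hr2 : (x - a) % n < n := Int.emod_lt_of_pos _ hn
    have hx : x = (a + (x - a) % n) + ((x - a) / n) * n := by
      have := Int.mul_ediv_add_emod (x - a) n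
      linarith [this]
    have : A x = A (a + (x - a) % n) := by
      conv_lhs => rw [hx]
      rw [periodic_mul A hper]
    rw [this]
    exact Submodule.subset_span ⟨a + (x - a) % n, ⟨by omega, by omega⟩, rfl⟩

/-- The linear equivalence given by an invertible matrix. -/
noncomputable def eAlpha (α : Matrix (Fin k) (Fin k) ℂ) (hα : IsUnit α.det) :
    (Fin k → ℂ) ≃ₗ[ℂ] (Fin k → ℂ) :=
  LinearEquiv.ofLinear α.mulVecLin α⁻¹.mulVecLin
    (by rw [← Matrix.mulVecLin_mul, Matrix.mul_nonsing_inv _ hα, Matrix.mulVecLin_one])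
    (by rw [← Matrix.mulVecLin_mul, Matrix.nonsing_inv_mul _ hα, Matrix.mulVecLin_one])

lemma indep_transfer (B : ℤ → Fin k → ℂ) (c : ℤ → ℂ) (hc : ∀ j : ℤ, c j ≠ 0)
    (e : (Fin k → ℂ) ≃ₗ[ℂ] (Fin k → ℂ)) (J : Finset ℤ)
    (h : LinearIndependent ℂ (fun j : (J : Set ℤ) => B (j : ℤ))) :
    LinearIndependent ℂ (fun j : (J : Set ℤ) => c (j : ℤ) • e (B (j : ℤ))) := by
  have h1 : LinearIndependent ℂ (fun j : (J : Set ℤ) => e (B (j : ℤ))) :=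
    h.map' e.toLinearMap (LinearMap.ker_eq_bot_of_injective e.injective)
  have h2 := h1.units_smul (fun j : (J : Set ℤ) => Units.mk0 (c (j : ℤ)) (hc (j : ℤ)))
  exact h2

lemma span_transfer (B : ℤ → Fin k → ℂ) (c : ℤ → ℂ) (hc : ∀ j : ℤ, c j ≠ 0)
    (e : (Fin k → ℂ) ≃ₗ[ℂ] (Fin k → ℂ)) (s : Set ℤ)
    (h : Submodule.span ℂ (B '' s) = ⊤) :
    Submodule.span ℂ ((fun j => c j • e (B j)) '' s) = ⊤ := by
  have h1 : Submodule.span ℂ ((fun j => c j • e (B j)) '' s)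
      = Submodule.span ℂ ((fun j => e (B j)) '' s) := by
    apply le_antisymm
    · rw [Submodule.span_le]
      rintro _ ⟨j, hj, rfl⟩
      show c j • e (B j) ∈ _
      exact Submodule.smul_mem _ _ (Submodule.subset_span ⟨j, hj, rfl⟩)
    · rw [Submodule.span_le]
      rintro _ ⟨j, hj, rfl⟩
      show e (B j) ∈ _
      have he : e (B j) = (c j)⁻¹ • (c j • e (B j)) := by
        rw [smul_smul, inv_mul_cancel₀ (hc j), one_smul]
      rw [he]
      exact Submodule.smul_mem _ _ (Submodule.subset_span ⟨j, hj, rfl⟩)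
  have h2 : ((fun j => e (B j)) '' s) = ⇑e '' (B '' s) := by
    rw [Set.image_image]
  rw [h1, h2, ← LinearEquiv.coe_coe, ← Submodule.map_span, h, Submodule.map_top]
  exact LinearMap.range_eq_top.2 e.surjective

lemma isColBasis_smul_map (B : ℤ → Fin k → ℂ) (c : ℤ → ℂ) (hc : ∀ j : ℤ, c j ≠ 0)
    (e : (Fin k → ℂ) ≃ₗ[ℂ] (Fin k → ℂ)) (J : Finset ℤ)
    (h : IsColBasis k B J) : IsColBasis k (fun j => c j • e (B j)) J :=
  ⟨h.1, indep_transfer B c hc e J h.2.1, span_transfer B c hc e _ h.2.2⟩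

lemma isColBasis_iff (A : ℤ → Fin k → ℂ) (α : Matrix (Fin k) (Fin k) ℂ) (hα : IsUnit α.det)
    (d : ℤ → ℂ) (hd : ∀ a : ℤ, d a ≠ 0) (J : Finset ℤ) :
    IsColBasis k (fun b => d b • α.mulVec (A b)) J ↔ IsColBasis k A J := by
  set e := eAlpha α hα with hedef
  have heapp : ∀ x, e x = α.mulVec x := fun x => rfl
  constructor
  · intro h
    have h2 := isColBasis_smul_map (fun b => d b • α.mulVec (A b))
      (fun j => (d j)⁻¹) (fun j => inv_ne_zero (hd j)) e.symm J h
    have hfe : (fun j : ℤ => (d j)⁻¹ • e.symm (d j • α.mulVec (A j))) = A := by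
      funext j
      rw [← heapp, map_smul, e.symm_apply_apply, smul_smul, inv_mul_cancel₀ (hd j), one_smul]
    rwa [hfe] at h2
  · intro h
    have h2 := isColBasis_smul_map A d hd e J h
    have hfe : (fun j : ℤ => d j • e (A j)) = (fun b => d b • α.mulVec (A b)) := by
      funext j; rw [heapp]
    rwa [hfe] at h2

lemma isMinBasis_iff (A : ℤ → Fin k → ℂ) (α : Matrix (Fin k) (Fin k) ℂ) (hα : IsUnit α.det)
    (d : ℤ → ℂ) (hd : ∀ a : ℤ, d a ≠ 0) (a : ℤ) (I : Finset ℤ) :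
    IsMinBasis k n (fun b => d b • α.mulVec (A b)) a I ↔ IsMinBasis k n A a I := by
  constructor <;> intro h <;>
    refine ⟨h.1, ?_, ?_⟩
  · exact (isColBasis_iff A α hα d hd I).1 h.2.1
  · intro J hJs hJ
    exact h.2.2 J hJs ((isColBasis_iff A α hα d hd J).2 hJ)
  · exact (isColBasis_iff A α hα d hd I).2 h.2.1
  · intro J hJs hJ
    exact h.2.2 J hJs ((isColBasis_iff A α hα d hd J).1 hJ)

end Transfer

/-- equivariance of the right twist: for every invertible
`k×k` matrix `α` and every invertible diagonal `n×n` matrix `β` (encoded by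
its periodic diagonal entries `d`, so that the columns of `α·A·β` are
`d a • α.mulVec (A a)`), the right twist satisfies
`τ→(α·A·β) = (α⁻¹)ᵀ · τ→(A) · β⁻¹`, i.e. its `a`-th column is
`(d a)⁻¹ • (α⁻¹)ᵀ.mulVec (τ→(A) a)`. -/
theorem twist_equivariance
    (k n : ℕ) (hk : 1 ≤ k) (hkn : k ≤ n)
    (A : ℤ → Fin k → ℂ) (hper : ColPeriodic k n A) (hrank : FullRank k A)
    (α : Matrix (Fin k) (Fin k) ℂ) (hα : IsUnit α.det)
    (d : ℤ → ℂ) (hd : ∀ a : ℤ, d a ≠ 0) (hdper : ∀ a : ℤ, d (a + (n : ℤ)) = d a)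
    (T T' : ℤ → Fin k → ℂ)
    (hT : IsRightTwist k n A T)
    (hT' : IsRightTwist k n (fun a => d a • α.mulVec (A a)) T') :
    ∀ a : ℤ, T' a = (d a)⁻¹ • (α⁻¹).transpose.mulVec (T a) := by
  classical
  intro a
  set A' : ℤ → Fin k → ℂ := fun b => d b • α.mulVec (A b) with hA'def
  set I : Finset ℤ := greedySet (n := n) A a with hIdef
  have hwin := window_span hk hkn A hper hrank a
  have hIA : IsMinBasis k n A a I := greedy_isMinBasis A a hk hwin
  have hIA' : IsMinBasis k n A' a I := (isMinBasis_iff A α hα d hd a I).2 hIA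
  set v : Fin k → ℂ := (d a)⁻¹ • (α⁻¹).transpose.mulVec (T a) with hvdef
  have hb1 := hT a I hIA
  have hb2 := hT' a I hIA'
  -- compute the pairing of `v` with the new columns
  have hcomp : ∀ b : ℤ, dotProduct v (A' b)
      = d b * ((d a)⁻¹ * dotProduct (T a) (A b)) := by
    intro b
    have h1 : A' b = d b • α.mulVec (A b) := rfl
    rw [h1, dotProduct_smul, hvdef, smul_dotProduct]
    have h2 : dotProduct ((α⁻¹).transpose.mulVec (T a)) (α.mulVec (A b))
        = dotProduct (T a) (A b) := by
      rw [Matrix.mulVec_transpose, Matrix.dotProduct_mulVec, Matrix.vecMul_vecMul,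
        Matrix.nonsing_inv_mul _ hα, Matrix.vecMul_one]
    rw [h2]
    simp [smul_eq_mul]
  have hbil : ∀ x y : Fin k → ℂ, bil k x y = dotProduct x y := fun x y => rfl
  -- the difference pairs to zero with all columns of the basis
  have hzero : ∀ b ∈ I, dotProduct (T' a - v) (A' b) = 0 := by
    intro b hb
    rw [sub_dotProduct]
    have e1 : dotProduct (T' a) (A' b) = if b = a then 1 else 0 := by
      rw [← hbil]; exact hb2 b hb
    have e2 : dotProduct v (A' b) = if b = a then 1 else 0 := by
      rw [hcomp b]
      have e3 : dotProduct (T a) (A b) = if b = a then 1 else 0 := by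
        rw [← hbil]; exact hb1 b hb
      rw [e3]
      by_cases hba : b = a
      · subst hba
        simp [mul_inv_cancel₀ (hd b)]
      · simp [hba]
    rw [e1, e2, sub_self]
  -- conclude by nondegeneracy of the pairing on a spanning set
  have hspan : Submodule.span ℂ (A' '' (I : Set ℤ)) = ⊤ := hIA'.2.1.2.2
  have hall : ∀ y : Fin k → ℂ, dotProduct (T' a - v) y = 0 := by
    intro y
    have hy : y ∈ Submodule.span ℂ (A' '' (I : Set ℤ)) := by rw [hspan]; trivial
    refine Submodule.span_induction
      (p := fun y _ => dotProduct (T' a - v) y = 0) ?_ ?_ ?_ ?_ hy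
    · rintro _ ⟨b, hb, rfl⟩
      exact hzero b (Finset.mem_coe.1 hb)
    · exact dotProduct_zero _
    · intro x y _ _ hx hy
      rw [dotProduct_add, hx, hy, add_zero]
    · intro c x _ hx
      rw [dotProduct_smul, hx, smul_zero]
  have hdiff : T' a - v = 0 := by
    funext i
    have := hall (Pi.single i 1)
    rwa [dotProduct_single, mul_one] at this
  have := sub_eq_zero.1 hdiff
  rw [this]
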